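/- For any polynomial f ∈ F[x₁,…,x_d], any point p ∈ F^d, and any multi-index α ∈ Z_{≥0}^d, the multiplicity of the Hasse derivative H^α f at p is at least mult(f,p) − |α|. -/

import Mathlib

open MvPolynomial

/-- Hasse derivative of a multivariate polynomial with respect to multi-index `α`. -/
noncomputable def hasseDeriv {d : ℕ} {F : Type*} [CommRing F] (α : Fin d →₀ ℕ)
    (f : MvPolynomial (Fin d) F) : MvPolynomial (Fin d) F :=
  (AddMonoidAlgebra.coeff f).sum fun β c => monomial (β - α) (c * ((∏ i, (β i).choose (α i) : ℕ) : F))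

/-- `f` has multiplicity at least `v` at `p`: all Hasse derivatives of order `< v` vanish at `p`. -/
def multAtLeast {d : ℕ} {F : Type*} [CommRing F] (f : MvPolynomial (Fin d) F)
    (p : Fin d → F) (v : ℕ) : Prop :=
  ∀ α : Fin d →₀ ℕ, (α.sum fun _ n => n) < v → eval p (hasseDeriv α f) = 0

private lemma choose_trans (n a b : ℕ) :
    n.choose a * (n - a).choose b = n.choose (a + b) * (a + b).choose a := by
  rcases le_or_gt (a + b) n with h | h
  · rw [Nat.choose_mul (Nat.le_add_right a b), Nat.add_sub_cancel_left]
  · have h1 : n.choose (a + b) = 0 := Nat.choose_eq_zero_of_lt h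
    rcases le_or_gt a n with ha | ha
    · have h2 : (n - a).choose b = 0 := Nat.choose_eq_zero_of_lt (by omega)
      simp [h1, h2]
    · simp [Nat.choose_eq_zero_of_lt ha, h1]

lemma hasseDeriv_monomial {d : ℕ} {F : Type*} [CommRing F] (α γ : Fin d →₀ ℕ) (c : F) :
    hasseDeriv α (monomial γ c) =
      monomial (γ - α) (c * ((∏ i, (γ i).choose (α i) : ℕ) : F)) := by
  unfold hasseDeriv
  show (Finsupp.single γ c).sum _ = _
  rw [Finsupp.sum_single_index]
  simp

lemma hasseDeriv_add {d : ℕ} {F : Type*} [CommRing F] (α : Fin d →₀ ℕ)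
    (f g : MvPolynomial (Fin d) F) :
    hasseDeriv α (f + g) = hasseDeriv α f + hasseDeriv α g := by
  unfold hasseDeriv
  exact Finsupp.sum_add_index (by simp) (by intros; rw [add_mul, map_add])

lemma hasseDeriv_comp {d : ℕ} {F : Type*} [CommRing F] (α β : Fin d →₀ ℕ)
    (f : MvPolynomial (Fin d) F) :
    hasseDeriv β (hasseDeriv α f) =
      (∏ i, ((α + β) i).choose (α i)) • hasseDeriv (α + β) f := by
  induction f using MvPolynomial.induction_on' with
  | monomial γ c =>
      rw [hasseDeriv_monomial, hasseDeriv_monomial, hasseDeriv_monomial]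
      have hexp : γ - α - β = γ - (α + β) := by
        ext i; simp [Nat.sub_sub]
      have hn : (∏ i, (γ i).choose (α i)) * (∏ i, ((γ - α) i).choose (β i)) =
          (∏ i, ((α + β) i).choose (α i)) * ∏ i, (γ i).choose ((α + β) i) := by
        rw [← Finset.prod_mul_distrib, ← Finset.prod_mul_distrib]
        apply Finset.prod_congr rfl
        intro i _
        have := choose_trans (γ i) (α i) (β i)
        simp only [Finsupp.coe_tsub, Pi.sub_apply, Finsupp.add_apply] at *
        rw [this]; ring
      have hn' := congrArg (fun n : ℕ => (n : F)) hn
      push_cast at hn'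
      rw [hexp, smul_monomial, nsmul_eq_mul]
      congr 1
      push_cast
      linear_combination c * hn'
  | add f g hf hg =>
      rw [hasseDeriv_add, hasseDeriv_add, hasseDeriv_add, hf, hg, smul_add]

/-- The multiplicity of `H^α f` at `p` is at least `mult(f,p) - |α|`. -/
theorem stmt1 {d : ℕ} {F : Type*} [Field F] (f : MvPolynomial (Fin d) F)
    (p : Fin d → F) (α : Fin d →₀ ℕ) (v : ℕ) (h : multAtLeast f p v) :
    multAtLeast (hasseDeriv α f) p (v - α.sum fun _ n => n) := by
  intro β hβ
  rw [hasseDeriv_comp, map_nsmul]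
  have hsum : ((α + β).sum fun _ n => n) = (α.sum fun _ n => n) + (β.sum fun _ n => n) :=
    Finsupp.sum_add_index' (by simp) (by simp)
  have : eval p (hasseDeriv (α + β) f) = 0 := h (α + β) (by omega)
  rw [this, smul_zero]
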